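/- Let X be a pure n-dimensional weighted simplicial complex, n > 1, with all links of dimension > 0 connected. For every -1 ≤ k ≤ n-2 and every ordered k-simplex τ, the spectrum of the upper 0-Laplacian Δ^+_{τ,0} on the link X_τ is contained in [0, (n-k)/(n-k-1)]. -/

import Mathlib

open Finset

open scoped Classical

/-- `X` is (the face set of) an abstract simplicial complex: downward closed. -/
def IsSC {V : Type*} [DecidableEq V] (X : Finset (Finset V)) : Prop :=
  ∀ s ∈ X, ∀ t ⊆ s, t ∈ X

/-- `X` is pure `n`-dimensional: every face is contained in a face of cardinality `n+1`. -/
def IsPure {V : Type*} [DecidableEq V] (X : Finset (Finset V)) (n : ℕ) : Prop :=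
  ∀ s ∈ X, ∃ t ∈ X, s ⊆ t ∧ t.card = n + 1

/-- A weight function on a pure `n`-dimensional complex `X`. -/
def IsWeight {V : Type*} [DecidableEq V] (X : Finset (Finset V)) (n : ℕ) (m : Finset V → ℝ) :
    Prop :=
  (∀ s ∈ X, 0 < m s) ∧
  ∀ s ∈ X, s.card ≤ n →
    m s = ∑ t ∈ X.filter (fun t => s ⊆ t ∧ t.card = s.card + 1), m t

/-- An ordered simplex of `X` with `a` vertices (an ordered `(a-1)`-simplex, element of
`Σ(a-1)`): an injective tuple whose image is a face of `X`. -/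
def OSimp {V : Type*} [Fintype V] [DecidableEq V] (X : Finset (Finset V)) {a : ℕ}
    (f : Fin a → V) : Prop :=
  Function.Injective f ∧ Finset.image f Finset.univ ∈ X

/-- A `(a-1)`-form: an antisymmetric real function on ordered tuples. -/
def IsForm {V : Type*} {a : ℕ} (φ : (Fin a → V) → ℝ) : Prop :=
  ∀ (f : Fin a → V) (π : Equiv.Perm (Fin a)),
    φ (f ∘ π) = ((Equiv.Perm.sign π : ℤ) : ℝ) * φ f

/-- The weighted inner product `⟨φ,ψ⟩ = Σ_{f ∈ Σ(a-1)} (m(f)/a!) φ(f) ψ(f)` on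
`(a-1)`-forms. -/
noncomputable def formIP {V : Type*} [Fintype V] [DecidableEq V] (X : Finset (Finset V))
    (m : Finset V → ℝ) {a : ℕ} (φ ψ : (Fin a → V) → ℝ) : ℝ :=
  ∑ f : Fin a → V,
    if OSimp X f then (m (Finset.image f Finset.univ) / (Nat.factorial a : ℝ)) * (φ f * ψ f)
    else 0

/-- The simplicial differential `d : C^{a-1} → C^a`. -/
def dOp {V : Type*} {a : ℕ} (φ : (Fin a → V) → ℝ) : (Fin (a + 1) → V) → ℝ :=
  fun f => ∑ i : Fin (a + 1), (-1 : ℝ) ^ (i : ℕ) * φ (fun j => f (i.succAbove j))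

/-- The codifferential `δ : C^a → C^{a-1}`, given by
`(δφ)(τ) = Σ_{v : vτ ∈ Σ(a)} (m(vτ)/m(τ)) φ(vτ)`. -/
noncomputable def deltaOp {V : Type*} [Fintype V] [DecidableEq V] (X : Finset (Finset V))
    (m : Finset V → ℝ) {a : ℕ} (φ : (Fin (a + 1) → V) → ℝ) : (Fin a → V) → ℝ :=
  fun τ => ∑ v : V,
    if OSimp X (Fin.cons v τ : Fin (a + 1) → V) then
      (m (Finset.image (Fin.cons v τ : Fin (a + 1) → V) Finset.univ) /
        m (Finset.image τ Finset.univ)) * φ (Fin.cons v τ)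
    else 0

/-- The vertices of the link of the face `τ`. -/
def linkVerts {V : Type*} [Fintype V] [DecidableEq V] (X : Finset (Finset V)) (τ : Finset V) :
    Finset V :=
  Finset.univ.filter (fun v => v ∉ τ ∧ insert v τ ∈ X)

/-- The upper `0`-Laplacian `Δ⁺_{τ,0}` of the link of the face `τ`, with the induced weight
`m_τ(σ) = m(τ ∪ σ)`:  `Δ⁺φ(u) = φ(u) - Σ_{v : {u,v} ∈ X_τ} (m_τ({u,v})/m_τ({u})) φ(v)`. -/
noncomputable def linkLap {V : Type*} [Fintype V] [DecidableEq V] (X : Finset (Finset V))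
    (m : Finset V → ℝ) (τ : Finset V) (φ : V → ℝ) : V → ℝ :=
  fun u => φ u -
    ∑ v ∈ Finset.univ.filter (fun v => v ∉ insert u τ ∧ insert v (insert u τ) ∈ X),
      (m (insert v (insert u τ)) / m (insert u τ)) * φ v

/-- `μ` is an eigenvalue of the upper `0`-Laplacian of the link of `τ`. -/
def linkEig {V : Type*} [Fintype V] [DecidableEq V] (X : Finset (Finset V)) (m : Finset V → ℝ)
    (τ : Finset V) (μ : ℝ) : Prop :=
  ∃ φ : V → ℝ, (∀ v, v ∉ linkVerts X τ → φ v = 0) ∧ (∃ u ∈ linkVerts X τ, φ u ≠ 0) ∧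
    ∀ u ∈ linkVerts X τ, linkLap X m τ φ u = μ * φ u

/-- The link of the face `τ` is a connected: any two of its vertices are joined by a path of
edges of the link. -/
def linkConn {V : Type*} [Fintype V] [DecidableEq V] (X : Finset (Finset V)) (τ : Finset V) :
    Prop :=
  ∀ u ∈ linkVerts X τ, ∀ v ∈ linkVerts X τ,
    Relation.ReflTransGen
      (fun a b => a ∈ linkVerts X τ ∧ b ∈ linkVerts X τ ∧ a ≠ b ∧ insert a (insert b τ) ∈ X)
      u v

section Aux
variable {V : Type*} [Fintype V] [DecidableEq V]

lemma balance_vertex (X : Finset (Finset V)) (n : ℕ) (m : Finset V → ℝ)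
    (hm : IsWeight X n m) {s : Finset V} (hs : s ∈ X) (hcard : s.card ≤ n) :
    m s = ∑ v ∈ Finset.univ.filter (fun v => v ∉ s ∧ insert v s ∈ X), m (insert v s) := by
  rw [hm.2 s hs hcard]
  refine (Finset.sum_bij (fun v _ => insert v s) ?_ ?_ ?_ ?_).symm
  · intro v hv
    simp only [mem_filter, mem_univ, true_and] at hv ⊢
    exact ⟨hv.2, Finset.subset_insert _ _, Finset.card_insert_of_notMem hv.1⟩
  · intro v₁ hv₁ v₂ hv₂ h
    simp only [mem_filter, mem_univ, true_and] at hv₁ hv₂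
    have h2 : insert v₁ s = insert v₂ s := h
    have : v₁ ∈ insert v₂ s := h2 ▸ Finset.mem_insert_self v₁ s
    rcases Finset.mem_insert.1 this with h' | h'
    · exact h'
    · exact absurd h' hv₁.1
  · intro t ht
    simp only [mem_filter] at ht
    obtain ⟨htX, hst, hcardt⟩ := ht
    have h1 : (t \ s).card = 1 := by
      rw [Finset.card_sdiff_of_subset hst, hcardt]; omega
    obtain ⟨v, hv⟩ := Finset.card_eq_one.1 h1
    have hvt : v ∈ t \ s := hv ▸ Finset.mem_singleton_self v
    have hvs : v ∉ s := (Finset.mem_sdiff.1 hvt).2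
    have hins : insert v s = t := by
      apply Finset.eq_of_subset_of_card_le
      · exact Finset.insert_subset (Finset.mem_sdiff.1 hvt).1 hst
      · rw [hcardt, Finset.card_insert_of_notMem hvs]
    refine ⟨v, ?_, hins⟩
    simp only [mem_filter, mem_univ, true_and]
    exact ⟨hvs, hins ▸ htX⟩
  · intro v hv; rfl

lemma weight_factorial (X : Finset (Finset V)) (n : ℕ) (m : Finset V → ℝ)
    (hSC : IsSC X) (hm : IsWeight X n m) (j : ℕ) :
    ∀ s ∈ X, s.card + j ≤ n + 1 →
      m s = (j.factorial : ℝ) *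
        ∑ t ∈ X.filter (fun t => s ⊆ t ∧ t.card = s.card + j), m t := by
  induction j with
  | zero =>
    intro s hs _
    have : X.filter (fun t => s ⊆ t ∧ t.card = s.card + 0) = {s} := by
      ext t
      simp only [mem_filter, mem_singleton]
      constructor
      · rintro ⟨htX, hst, hc⟩
        exact (Finset.eq_of_subset_of_card_le hst (by omega)).symm
      · rintro rfl; exact ⟨hs, Finset.Subset.refl _, rfl⟩
    rw [this, Finset.sum_singleton]
    simp
  | succ j ih =>
    intro s hs hcard
    have hs_le : s.card ≤ n := by omega
    rw [hm.2 s hs hs_le]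
    have step : ∀ t ∈ X.filter (fun t => s ⊆ t ∧ t.card = s.card + 1),
        m t = (j.factorial : ℝ) *
          ∑ t' ∈ X.filter (fun t' => t ⊆ t' ∧ t'.card = s.card + 1 + j), m t' := by
      intro t ht
      simp only [mem_filter] at ht
      rw [ih t ht.1 (by omega)]
      rw [ht.2.2]
    rw [Finset.sum_congr rfl step, ← Finset.mul_sum]
    have swap : ∑ t ∈ X.filter (fun t => s ⊆ t ∧ t.card = s.card + 1),
        ∑ t' ∈ X.filter (fun t' => t ⊆ t' ∧ t'.card = s.card + 1 + j), m t'
        = ∑ t' ∈ X.filter (fun t' => s ⊆ t' ∧ t'.card = s.card + (j+1)),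
            ∑ t ∈ (X.filter (fun t => s ⊆ t ∧ t.card = s.card + 1)).filter (fun t => t ⊆ t'),
              m t' := by
      apply Finset.sum_comm'
      intro t t'
      simp only [mem_filter]
      constructor
      · rintro ⟨⟨htX, hst, hct⟩, ht'X, htt', hct'⟩
        exact ⟨⟨⟨htX, hst, hct⟩, htt'⟩, ht'X, hst.trans htt', by omega⟩
      · rintro ⟨⟨⟨htX, hst, hct⟩, htt'⟩, ht'X, hst', hct'⟩
        exact ⟨⟨htX, hst, hct⟩, ht'X, htt', by omega⟩
    rw [swap]
    have cardeq : ∀ t' ∈ X.filter (fun t' => s ⊆ t' ∧ t'.card = s.card + (j+1)),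
        ∑ t ∈ (X.filter (fun t => s ⊆ t ∧ t.card = s.card + 1)).filter (fun t => t ⊆ t'),
          m t' = ((j:ℝ) + 1) * m t' := by
      intro t' ht'
      simp only [mem_filter] at ht'
      obtain ⟨ht'X, hst', hct'⟩ := ht'
      rw [Finset.sum_const]
      have hc : ((X.filter (fun t => s ⊆ t ∧ t.card = s.card + 1)).filter
          (fun t => t ⊆ t')).card = j + 1 := by
        have : (t' \ s).card = j + 1 := by rw [Finset.card_sdiff_of_subset hst']; omega
        rw [← this]
        refine (Finset.card_bij (fun v _ => insert v s) ?_ ?_ ?_).symm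
        · intro v hv
          have hvs : v ∉ s := (Finset.mem_sdiff.1 hv).2
          have hvt' : v ∈ t' := (Finset.mem_sdiff.1 hv).1
          simp only [mem_filter]
          have hsub : insert v s ⊆ t' := Finset.insert_subset hvt' hst'
          exact ⟨⟨hSC t' ht'X _ hsub, Finset.subset_insert _ _,
            Finset.card_insert_of_notMem hvs⟩, hsub⟩
        · intro v₁ hv₁ v₂ hv₂ h
          have hv₁s : v₁ ∉ s := (Finset.mem_sdiff.1 hv₁).2
          have h2 : insert v₁ s = insert v₂ s := h
          have : v₁ ∈ insert v₂ s := h2 ▸ Finset.mem_insert_self v₁ s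
          rcases Finset.mem_insert.1 this with h' | h'
          · exact h'
          · exact absurd h' hv₁s
        · intro t ht
          simp only [mem_filter] at ht
          obtain ⟨⟨htX, hst, hct⟩, htt'⟩ := ht
          have h1 : (t \ s).card = 1 := by rw [Finset.card_sdiff_of_subset hst]; omega
          obtain ⟨v, hv⟩ := Finset.card_eq_one.1 h1
          have hvt : v ∈ t \ s := hv ▸ Finset.mem_singleton_self v
          have hvs : v ∉ s := (Finset.mem_sdiff.1 hvt).2
          have hins : insert v s = t := by
            apply Finset.eq_of_subset_of_card_le
            · exact Finset.insert_subset (Finset.mem_sdiff.1 hvt).1 hst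
            · rw [hct, Finset.card_insert_of_notMem hvs]
          exact ⟨v, Finset.mem_sdiff.2 ⟨htt' (hins ▸ Finset.mem_insert_self v s), hvs⟩, hins⟩
      rw [hc]
      push_cast
      ring
    rw [Finset.sum_congr rfl cardeq, ← Finset.mul_sum]
    rw [Nat.factorial_succ]
    push_cast
    ring

end Aux

/-- Let `X` be a pure `n`-dimensional weighted simplicial complex, `n > 1`,
with all links of dimension `> 0` connected.  For every `-1 ≤ k ≤ n-2` and every `k`-simplex
`τ` (face with `τ.card = k + 1 ≤ n - 1`), the spectrum of the upper `0`-Laplacian of the link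
`X_τ` is contained in `[0, (n-k)/(n-k-1)] = [0, (n+1-τ.card)/(n-τ.card)]`. -/
theorem stmt11 {V : Type*} [Fintype V] [DecidableEq V] (n : ℕ) (hn : 1 < n)
    (X : Finset (Finset V)) (hSC : IsSC X) (hpure : IsPure X n)
    (hconn : ∀ s ∈ X, s.card + 1 ≤ n → linkConn X s)
    (m : Finset V → ℝ) (hm : IsWeight X n m) :
    ∀ τ ∈ X, τ.card + 1 ≤ n →
      ∀ μ : ℝ, linkEig X m τ μ →
        0 ≤ μ ∧ μ ≤ ((n : ℝ) + 1 - τ.card) / ((n : ℝ) - τ.card) := by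
  intro τ hτ hτcard μ hμ
  obtain ⟨φ, hφ0, ⟨u₀, hu₀L, hu₀⟩, heig⟩ := hμ
  set d : ℕ := n - τ.card with hd_def
  have hd1 : 1 ≤ d := by omega
  have hdn : τ.card + d = n := by omega
  -- membership in the link
  have hmemL : ∀ u, u ∈ linkVerts X τ ↔ (u ∉ τ ∧ insert u τ ∈ X) := by
    intro u; simp [linkVerts]
  -- the pair condition
  set C : V → V → Prop := fun u v =>
    (u ∉ τ ∧ insert u τ ∈ X) ∧ v ∉ insert u τ ∧ insert v (insert u τ) ∈ X with hC_def
  have hCsymm : ∀ u v, C u v → C v u := by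
    intro u v ⟨⟨hu1, hu2⟩, hv1, hv2⟩
    have hvu : v ≠ u := fun h => hv1 (h ▸ Finset.mem_insert_self u τ)
    have hvτ : v ∉ τ := fun h => hv1 (Finset.mem_insert_of_mem h)
    have hvX : insert v τ ∈ X := by
      apply hSC _ hv2
      intro x hx
      rcases Finset.mem_insert.1 hx with rfl | hx
      · exact Finset.mem_insert_self _ _
      · exact Finset.mem_insert_of_mem (Finset.mem_insert_of_mem hx)
    refine ⟨⟨hvτ, hvX⟩, ?_, ?_⟩
    · intro hmem
      rcases Finset.mem_insert.1 hmem with h | h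
      · exact hvu h.symm
      · exact hu1 h
    · rw [Finset.insert_comm]; exact hv2
  -- the two main sums
  set S : ℝ := ∑ u ∈ linkVerts X τ, m (insert u τ) * φ u ^ 2 with hS_def
  set P : ℝ := ∑ u ∈ linkVerts X τ,
      ∑ v ∈ Finset.univ.filter (fun v => v ∉ insert u τ ∧ insert v (insert u τ) ∈ X),
        m (insert v (insert u τ)) * (φ u * φ v) with hP_def
  -- positivity of S
  have hSpos : 0 < S := by
    apply Finset.sum_pos'
    · intro u hu
      have := (hmemL u).1 hu
      exact mul_nonneg (le_of_lt (hm.1 _ this.2)) (sq_nonneg _)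
    · refine ⟨u₀, hu₀L, ?_⟩
      have := (hmemL u₀).1 hu₀L
      exact mul_pos (hm.1 _ this.2) (by positivity)
  -- μ * S = S - P
  have hmuS : μ * S = S - P := by
    rw [hS_def, hP_def, Finset.mul_sum, ← Finset.sum_sub_distrib]
    apply Finset.sum_congr rfl
    intro u hu
    obtain ⟨hu1, hu2⟩ := (hmemL u).1 hu
    have h := heig u hu
    simp only [linkLap] at h
    have hmne : m (insert u τ) ≠ 0 := ne_of_gt (hm.1 _ hu2)
    have expand : ∑ v ∈ Finset.univ.filter
          (fun v => v ∉ insert u τ ∧ insert v (insert u τ) ∈ X),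
          m (insert v (insert u τ)) * (φ u * φ v)
        = m (insert u τ) * φ u * ∑ v ∈ Finset.univ.filter
          (fun v => v ∉ insert u τ ∧ insert v (insert u τ) ∈ X),
          (m (insert v (insert u τ)) / m (insert u τ)) * φ v := by
      rw [Finset.mul_sum]
      apply Finset.sum_congr rfl
      intro v _
      field_simp
    rw [expand]
    have h2 : μ * (m (insert u τ) * φ u ^ 2) = m (insert u τ) * φ u * (μ * φ u) := by ring
    rw [h2, ← h]
    ring
  -- 0 ≤ S - P
  have hSP : 0 ≤ S - P := by
    have hSrw : S = ∑ u ∈ linkVerts X τ,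
        ∑ v ∈ Finset.univ.filter (fun v => v ∉ insert u τ ∧ insert v (insert u τ) ∈ X),
          m (insert v (insert u τ)) * φ u ^ 2 := by
      rw [hS_def]
      apply Finset.sum_congr rfl
      intro u hu
      obtain ⟨hu1, hu2⟩ := (hmemL u).1 hu
      rw [balance_vertex X n m hm hu2
          (by rw [Finset.card_insert_of_notMem hu1]; omega), Finset.sum_mul]
    have hD : S - P = ∑ u : V, ∑ v : V,
        (if C u v then m (insert v (insert u τ)) * (φ u ^ 2 - φ u * φ v) else 0) := by
      rw [hSrw, hP_def, ← Finset.sum_sub_distrib]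
      simp only [linkVerts]
      rw [Finset.sum_filter]
      apply Finset.sum_congr rfl
      intro u _
      by_cases hcu : (u ∉ τ ∧ insert u τ ∈ X)
      · rw [if_pos hcu, ← Finset.sum_sub_distrib, Finset.sum_filter]
        apply Finset.sum_congr rfl
        intro v _
        by_cases hc2 : (v ∉ insert u τ ∧ insert v (insert u τ) ∈ X)
        · have hCuv : C u v := ⟨hcu, hc2⟩
          rw [if_pos hc2, if_pos hCuv]
          ring
        · have hnC : ¬ C u v := fun h => hc2 h.2
          rw [if_neg hc2, if_neg hnC]
      · rw [if_neg hcu]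
        symm
        apply Finset.sum_eq_zero
        intro v _
        rw [if_neg]
        exact fun h => hcu h.1
    have hterm : ∀ u v : V, 0 ≤
        (if C u v then m (insert v (insert u τ)) * (φ u ^ 2 - φ u * φ v) else 0)
        + (if C v u then m (insert u (insert v τ)) * (φ v ^ 2 - φ v * φ u) else 0) := by
      intro u v
      by_cases hc : C u v
      · have hc' := hCsymm u v hc
        rw [if_pos hc, if_pos hc', Finset.insert_comm u v]
        have hmpos : 0 ≤ m (insert v (insert u τ)) := le_of_lt (hm.1 _ hc.2.2)
        nlinarith [sq_nonneg (φ u - φ v)]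
      · have hc' : ¬ C v u := fun h => hc (hCsymm v u h)
        rw [if_neg hc, if_neg hc']
        simp
    have e2 : ∑ u : V, ∑ v : V,
        (if C v u then m (insert u (insert v τ)) * (φ v ^ 2 - φ v * φ u) else 0) = S - P := by
      rw [Finset.sum_comm]
      exact hD.symm
    have hsplit : ∑ u : V, ∑ v : V,
        ((if C u v then m (insert v (insert u τ)) * (φ u ^ 2 - φ u * φ v) else 0)
        + (if C v u then m (insert u (insert v τ)) * (φ v ^ 2 - φ v * φ u) else 0))
        = (∑ u : V, ∑ v : V,
            (if C u v then m (insert v (insert u τ)) * (φ u ^ 2 - φ u * φ v) else 0))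
        + (∑ u : V, ∑ v : V,
            (if C v u then m (insert u (insert v τ)) * (φ v ^ 2 - φ v * φ u) else 0)) := by
      rw [← Finset.sum_add_distrib]
      exact Finset.sum_congr rfl fun u _ => Finset.sum_add_distrib
    have hnn : (0:ℝ) ≤ ∑ u : V, ∑ v : V,
        ((if C u v then m (insert v (insert u τ)) * (φ u ^ 2 - φ u * φ v) else 0)
        + (if C v u then m (insert u (insert v τ)) * (φ v ^ 2 - φ v * φ u) else 0)) :=
      Finset.sum_nonneg fun u _ => Finset.sum_nonneg fun v _ => hterm u v
    rw [hsplit, ← hD, e2] at hnn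
    linarith
  -- the top-dimensional key inequality : 0 ≤ S + d * P
  have hKey : 0 ≤ S + (d : ℝ) * P := by
    set T := X.filter (fun t => τ ⊆ t ∧ t.card = n + 1) with hT_def
    set A : ℝ := ∑ t ∈ T, m t * ∑ u ∈ t \ τ, φ u ^ 2 with hA_def
    set B : ℝ := ∑ t ∈ T, m t * ∑ p ∈ (t \ τ).offDiag, φ p.1 * φ p.2 with hB_def
    -- 0 ≤ A + B, since A + B = Σ_t m t (Σ_{u ∈ t\τ} φ u)²
    have hKeyPos : 0 ≤ A + B := by
      have hAB : A + B = ∑ t ∈ T, m t * (∑ u ∈ t \ τ, φ u) ^ 2 := by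
        rw [hA_def, hB_def, ← Finset.sum_add_distrib]
        apply Finset.sum_congr rfl
        intro t _
        rw [← mul_add]
        congr 1
        rw [sq, Finset.sum_mul_sum, ← Finset.sum_product', ← Finset.diag_union_offDiag (t \ τ),
          Finset.sum_union (Finset.disjoint_diag_offDiag _), Finset.sum_diag]
        congr 1
        apply Finset.sum_congr rfl
        intro u _
        rw [sq]
      rw [hAB]
      apply Finset.sum_nonneg
      intro t ht
      exact mul_nonneg (le_of_lt (hm.1 t (Finset.mem_filter.1 ht).1)) (sq_nonneg _)
    -- S = d! * A
    have hSA : S = (d.factorial : ℝ) * A := by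
      have inner : ∀ t, m t * ∑ u ∈ t \ τ, φ u ^ 2
          = ∑ u : V, (if u ∈ t \ τ then m t * φ u ^ 2 else 0) := by
        intro t
        rw [Finset.mul_sum, Finset.sum_ite_mem, Finset.univ_inter]
      have hA1 : A = ∑ u : V, ∑ t ∈ T, (if u ∈ t \ τ then m t * φ u ^ 2 else 0) := by
        rw [hA_def, Finset.sum_congr rfl (fun t _ => inner t), Finset.sum_comm]
      have inner2 : ∀ u : V,
          (d.factorial : ℝ) * ∑ t ∈ T, (if u ∈ t \ τ then m t * φ u ^ 2 else 0)
          = (if (u ∉ τ ∧ insert u τ ∈ X) then m (insert u τ) * φ u ^ 2 else 0) := by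
        intro u
        by_cases hcu : (u ∉ τ ∧ insert u τ ∈ X)
        · rw [if_pos hcu]
          have hfilter_eq : T.filter (fun t => u ∈ t \ τ)
              = X.filter (fun t => insert u τ ⊆ t ∧ t.card = (insert u τ).card + d) := by
            ext t
            constructor
            · intro ht
              obtain ⟨hT, hmem⟩ := Finset.mem_filter.1 ht
              obtain ⟨htX, hsub, hc⟩ := Finset.mem_filter.1 hT
              obtain ⟨hut, huτ⟩ := Finset.mem_sdiff.1 hmem
              refine Finset.mem_filter.2 ⟨htX, Finset.insert_subset hut hsub, ?_⟩
              rw [Finset.card_insert_of_notMem hcu.1]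
              omega
            · intro ht
              obtain ⟨htX, hsub, hc⟩ := Finset.mem_filter.1 ht
              have hut : u ∈ t := hsub (Finset.mem_insert_self u τ)
              have hτt : τ ⊆ t := (Finset.subset_insert u τ).trans hsub
              refine Finset.mem_filter.2 ⟨Finset.mem_filter.2 ⟨htX, hτt, ?_⟩,
                Finset.mem_sdiff.2 ⟨hut, hcu.1⟩⟩
              rw [hc, Finset.card_insert_of_notMem hcu.1]
              omega
          have hw := weight_factorial X n m hSC hm d (insert u τ) hcu.2
            (by rw [Finset.card_insert_of_notMem hcu.1]; omega)
          rw [← Finset.sum_filter, hfilter_eq, ← Finset.sum_mul, ← mul_assoc, ← hw]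
        · rw [if_neg hcu]
          have hz : ∀ t ∈ T, (if u ∈ t \ τ then m t * φ u ^ 2 else 0) = 0 := by
            intro t ht
            rw [if_neg]
            intro hmem
            obtain ⟨hut, huτ⟩ := Finset.mem_sdiff.1 hmem
            obtain ⟨htX, hτt, _⟩ := Finset.mem_filter.1 ht
            exact hcu ⟨huτ, hSC t htX _ (Finset.insert_subset hut hτt)⟩
          rw [Finset.sum_congr rfl hz]
          simp
      calc S = ∑ u : V, (if (u ∉ τ ∧ insert u τ ∈ X) then m (insert u τ) * φ u ^ 2 else 0) := by
              rw [hS_def]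
              simp only [linkVerts]
              rw [Finset.sum_filter]
        _ = ∑ u : V, (d.factorial : ℝ) * ∑ t ∈ T, (if u ∈ t \ τ then m t * φ u ^ 2 else 0) :=
              Finset.sum_congr rfl (fun u _ => (inner2 u).symm)
        _ = (d.factorial : ℝ) * A := by rw [← Finset.mul_sum, hA1]
    -- P = (d-1)! * B
    have hPB : P = ((d-1).factorial : ℝ) * B := by
      have inner : ∀ t, m t * ∑ p ∈ (t \ τ).offDiag, φ p.1 * φ p.2
          = ∑ p : V × V, (if p ∈ (t \ τ).offDiag then m t * (φ p.1 * φ p.2) else 0) := by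
        intro t
        rw [Finset.mul_sum, Finset.sum_ite_mem, Finset.univ_inter]
      have hB1 : B = ∑ p : V × V, ∑ t ∈ T,
          (if p ∈ (t \ τ).offDiag then m t * (φ p.1 * φ p.2) else 0) := by
        rw [hB_def, Finset.sum_congr rfl (fun t _ => inner t), Finset.sum_comm]
      have inner2 : ∀ p : V × V,
          ((d-1).factorial : ℝ) * ∑ t ∈ T, (if p ∈ (t \ τ).offDiag then m t * (φ p.1 * φ p.2) else 0)
          = (if C p.1 p.2 then m (insert p.2 (insert p.1 τ)) * (φ p.1 * φ p.2) else 0) := by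
        intro p
        by_cases hc : C p.1 p.2
        · rw [if_pos hc]
          obtain ⟨⟨h1, h2⟩, h3, h4⟩ := hc
          have hp12 : p.2 ≠ p.1 := fun h => h3 (h ▸ Finset.mem_insert_self _ _)
          have hp2τ : p.2 ∉ τ := fun h => h3 (Finset.mem_insert_of_mem h)
          have hcard2 : (insert p.2 (insert p.1 τ)).card = τ.card + 2 := by
            rw [Finset.card_insert_of_notMem h3, Finset.card_insert_of_notMem h1]
          have hfilter_eq : T.filter (fun t => p ∈ (t \ τ).offDiag)
              = X.filter (fun t => insert p.2 (insert p.1 τ) ⊆ t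
                  ∧ t.card = (insert p.2 (insert p.1 τ)).card + (d-1)) := by
            ext t
            constructor
            · intro ht
              obtain ⟨hT, hmem⟩ := Finset.mem_filter.1 ht
              obtain ⟨htX, hsub, hc'⟩ := Finset.mem_filter.1 hT
              obtain ⟨hm1, hm2, hne⟩ := Finset.mem_offDiag.1 hmem
              obtain ⟨h1t, _⟩ := Finset.mem_sdiff.1 hm1
              obtain ⟨h2t, _⟩ := Finset.mem_sdiff.1 hm2
              refine Finset.mem_filter.2 ⟨htX,
                Finset.insert_subset h2t (Finset.insert_subset h1t hsub), ?_⟩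
              rw [hcard2]
              omega
            · intro ht
              obtain ⟨htX, hsub, hc'⟩ := Finset.mem_filter.1 ht
              have hp2t : p.2 ∈ t := hsub (Finset.mem_insert_self _ _)
              have hp1t : p.1 ∈ t := hsub (Finset.mem_insert_of_mem (Finset.mem_insert_self _ _))
              have hτt : τ ⊆ t := by
                intro x hx
                exact hsub (Finset.mem_insert_of_mem (Finset.mem_insert_of_mem hx))
              refine Finset.mem_filter.2 ⟨Finset.mem_filter.2 ⟨htX, hτt, ?_⟩,
                Finset.mem_offDiag.2 ⟨Finset.mem_sdiff.2 ⟨hp1t, h1⟩,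
                  Finset.mem_sdiff.2 ⟨hp2t, hp2τ⟩, fun h => hp12 h.symm⟩⟩
              rw [hc', hcard2]
              omega
          have hw := weight_factorial X n m hSC hm (d-1) (insert p.2 (insert p.1 τ)) h4
            (by rw [hcard2]; omega)
          rw [← Finset.sum_filter, hfilter_eq, ← Finset.sum_mul, ← mul_assoc, ← hw]
        · rw [if_neg hc]
          have hz : ∀ t ∈ T, (if p ∈ (t \ τ).offDiag then m t * (φ p.1 * φ p.2) else 0) = 0 := by
            intro t ht
            rw [if_neg]
            intro hmem
            obtain ⟨htX, hτt, _⟩ := Finset.mem_filter.1 ht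
            obtain ⟨hm1, hm2, hne⟩ := Finset.mem_offDiag.1 hmem
            obtain ⟨h1t, h1τ⟩ := Finset.mem_sdiff.1 hm1
            obtain ⟨h2t, h2τ⟩ := Finset.mem_sdiff.1 hm2
            apply hc
            refine ⟨⟨h1τ, hSC t htX _ (Finset.insert_subset h1t hτt)⟩, ?_, ?_⟩
            · intro hmem'
              rcases Finset.mem_insert.1 hmem' with h | h
              · exact hne h.symm
              · exact h2τ h
            · exact hSC t htX _ (Finset.insert_subset h2t (Finset.insert_subset h1t hτt))
          rw [Finset.sum_congr rfl hz]
          simp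
      have hP1 : ∑ p : V × V,
          (if C p.1 p.2 then m (insert p.2 (insert p.1 τ)) * (φ p.1 * φ p.2) else 0) = P := by
        rw [Fintype.sum_prod_type, hP_def]
        simp only [linkVerts]
        rw [Finset.sum_filter]
        apply Finset.sum_congr rfl
        intro u _
        by_cases hcu : (u ∉ τ ∧ insert u τ ∈ X)
        · rw [if_pos hcu, Finset.sum_filter]
          apply Finset.sum_congr rfl
          intro v _
          have hiff : C u v ↔ (v ∉ insert u τ ∧ insert v (insert u τ) ∈ X) :=
            ⟨fun h => h.2, fun h => ⟨hcu, h⟩⟩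
          rw [if_congr hiff rfl rfl]
        · rw [if_neg hcu]
          apply Finset.sum_eq_zero
          intro v _
          rw [if_neg]
          exact fun h => hcu h.1
      rw [← hP1, hB1, Finset.mul_sum]
      exact Finset.sum_congr rfl (fun p _ => (inner2 p).symm)
    have hfact : (d.factorial : ℝ) = (d : ℝ) * ((d-1).factorial : ℝ) := by
      rw_mod_cast [Nat.mul_factorial_pred (by omega : d ≠ 0)]
    have hcomb : S + (d : ℝ) * P = (d.factorial : ℝ) * (A + B) := by
      rw [hSA, hPB, hfact]
      ring
    rw [hcomb]
    exact mul_nonneg (by positivity) hKeyPos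
  -- conclude
  have hτn : (τ.card : ℝ) + 1 ≤ (n : ℝ) := by exact_mod_cast hτcard
  have hdR : (d : ℝ) = (n : ℝ) - τ.card := by
    rw [hd_def]; push_cast [Nat.cast_sub (by omega : τ.card ≤ n)]; ring
  have hncpos : (0 : ℝ) < (n : ℝ) - τ.card := by linarith
  constructor
  · nlinarith [hmuS, hSP, hSpos]
  · rw [le_div_iff₀ hncpos]
    have hP' : -S ≤ ((n:ℝ) - τ.card) * P := by rw [← hdR]; linarith
    nlinarith [hmuS, hSpos, hP', hncpos]
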